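/- For the finite-volume zero-temperature Ising chain on a segment ⟦ℓ, n⟧ with left boundary spin a ∈ {−1, +1}, the reflected recursion started at aΓ computes the difference of maximal Hamiltonian values: \widehat{l}_{ℓ,n}^{(a)} = max over σ ∈ {−1,+1}^{⟦ℓ,n⟧} of H^{a+}_{ℓ,n,J,h}(σ) minus max over σ of H^{a−}_{ℓ,n,J,h}(σ), where \widehat{l}^{(a)}_{ℓ,ℓ−1} = aΓ and \widehat{l}^{(a)}_{ℓ,m} = clamp(\widehat{l}^{(a)}_{ℓ,m−1} + 2h_m, −Γ, Γ). -/

import Mathlib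

/-- Hard-wall projection onto `[-Γ, Γ]`. -/
noncomputable def hatb (Γ x : ℝ) : ℝ := max (-Γ) (min Γ x)

/-- The Hamiltonian `H^{ab}_{ℓ,n,J,h}(σ)` of the Ising chain on `⟦ℓ, n⟧` with
boundary spins `σ_{ℓ-1} = a` and `σ_{n+1} = b`. -/
noncomputable def ham (J : ℝ) (h : ℤ → ℝ) (ℓ n : ℤ) (a b : ℝ) (σ : ℤ → ℝ) : ℝ :=
  let σ' : ℤ → ℝ := fun m => if m = ℓ - 1 then a else if m = n + 1 then b else σ m
  J * ∑ m ∈ Finset.Icc ℓ (n + 1), σ' (m - 1) * σ' m + ∑ m ∈ Finset.Icc ℓ n, h m * σ' m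

/-- The maximal value of the Hamiltonian over spin configurations. -/
noncomputable def maxHam (J : ℝ) (h : ℤ → ℝ) (ℓ n : ℤ) (a b : ℝ) : ℝ :=
  sSup {x | ∃ σ : ℤ → ℝ, (∀ m, σ m = 1 ∨ σ m = -1) ∧ x = ham J h ℓ n a b σ}

namespace Stmt18Aux

noncomputable def hamAux (J : ℝ) (h : ℤ → ℝ) (ℓ n : ℤ) (τ : ℤ → ℝ) : ℝ :=
  J * ∑ m ∈ Finset.Icc ℓ (n + 1), τ (m - 1) * τ m + ∑ m ∈ Finset.Icc ℓ n, h m * τ m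

def bdry (ℓ n : ℤ) (a b : ℝ) (σ : ℤ → ℝ) : ℤ → ℝ :=
  fun m => if m = ℓ - 1 then a else if m = n + 1 then b else σ m

lemma ham_eq (J : ℝ) (h : ℤ → ℝ) (ℓ n : ℤ) (a b : ℝ) (σ : ℤ → ℝ) :
    ham J h ℓ n a b σ = hamAux J h ℓ n (bdry ℓ n a b σ) := rfl

def hamSet (J : ℝ) (h : ℤ → ℝ) (ℓ n : ℤ) (a b : ℝ) : Set ℝ :=
  {x | ∃ σ : ℤ → ℝ, (∀ m, σ m = 1 ∨ σ m = -1) ∧ x = ham J h ℓ n a b σ}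

lemma maxHam_eq (J : ℝ) (h : ℤ → ℝ) (ℓ n : ℤ) (a b : ℝ) :
    maxHam J h ℓ n a b = sSup (hamSet J h ℓ n a b) := rfl

lemma sum_Icc_top (a b : ℤ) (hab : a ≤ b + 1) (f : ℤ → ℝ) :
    ∑ m ∈ Finset.Icc a (b + 1), f m = (∑ m ∈ Finset.Icc a b, f m) + f (b + 1) := by
  have : Finset.Icc a (b + 1) = insert (b + 1) (Finset.Icc a b) := by
    ext x; simp only [Finset.mem_Icc, Finset.mem_insert]; omega
  rw [this, Finset.sum_insert (by simp)]
  ring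

lemma hamSet_nonempty (J : ℝ) (h : ℤ → ℝ) (ℓ n : ℤ) (a b : ℝ) :
    (hamSet J h ℓ n a b).Nonempty :=
  ⟨ham J h ℓ n a b (fun _ => 1), fun _ => 1, fun _ => Or.inl rfl, rfl⟩

lemma hamSet_bddAbove (J : ℝ) (hJ : 0 ≤ J) (h : ℤ → ℝ) (ℓ n : ℤ) (a b : ℝ)
    (ha : a = 1 ∨ a = -1) (hb : b = 1 ∨ b = -1) :
    BddAbove (hamSet J h ℓ n a b) := by
  refine ⟨J * (Finset.Icc ℓ (n + 1)).card + ∑ m ∈ Finset.Icc ℓ n, |h m|, ?_⟩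
  rintro x ⟨σ, hσ, rfl⟩
  rw [ham_eq]
  unfold hamAux
  have key : ∀ m : ℤ, bdry ℓ n a b σ m = 1 ∨ bdry ℓ n a b σ m = -1 := by
    intro m; unfold bdry; split_ifs
    · exact ha
    · exact hb
    · exact hσ m
  have h1 : ∑ m ∈ Finset.Icc ℓ (n + 1), bdry ℓ n a b σ (m - 1) * bdry ℓ n a b σ m
      ≤ ((Finset.Icc ℓ (n + 1)).card : ℝ) := by
    have := Finset.sum_le_card_nsmul (Finset.Icc ℓ (n + 1))
      (fun m => bdry ℓ n a b σ (m - 1) * bdry ℓ n a b σ m) 1 (by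
        intro m _
        rcases key (m - 1) with h1 | h1 <;> rcases key m with h2 | h2 <;>
          rw [h1, h2] <;> norm_num)
    simpa using this
  have h2 : ∑ m ∈ Finset.Icc ℓ n, h m * bdry ℓ n a b σ m ≤ ∑ m ∈ Finset.Icc ℓ n, |h m| := by
    refine Finset.sum_le_sum fun m _ => ?_
    rcases key m with h1 | h1 <;> rw [h1]
    · simpa using le_abs_self (h m)
    · simpa using neg_le_abs (h m)
  have := mul_le_mul_of_nonneg_left h1 hJ
  linarith

lemma ham_base (J : ℝ) (h : ℤ → ℝ) (ℓ : ℤ) (a b : ℝ) (σ : ℤ → ℝ) :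
    ham J h ℓ (ℓ - 1) a b σ = J * (a * b) := by
  rw [ham_eq]
  unfold hamAux
  rw [show ℓ - 1 + 1 = ℓ by ring, Finset.Icc_self, Finset.sum_singleton,
    Finset.Icc_eq_empty (by omega), Finset.sum_empty]
  have e1 : bdry ℓ (ℓ - 1) a b σ (ℓ - 1) = a := by unfold bdry; rw [if_pos rfl]
  have e2 : bdry ℓ (ℓ - 1) a b σ ℓ = b := by
    unfold bdry; rw [if_neg (by omega), if_pos (by ring)]
  rw [e1, e2]; ring

lemma maxHam_base (J : ℝ) (h : ℤ → ℝ) (ℓ : ℤ) (a b : ℝ) :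
    maxHam J h ℓ (ℓ - 1) a b = J * (a * b) := by
  rw [maxHam_eq]
  have : hamSet J h ℓ (ℓ - 1) a b = {J * (a * b)} := by
    ext x
    constructor
    · rintro ⟨σ, hσ, rfl⟩; exact ham_base J h ℓ a b σ
    · rintro rfl; exact ⟨fun _ => 1, fun _ => Or.inl rfl, (ham_base J h ℓ a b _).symm⟩
  rw [this, csSup_singleton]

lemma hamAux_congr (J : ℝ) (h : ℤ → ℝ) (ℓ n : ℤ) (τ₁ τ₂ : ℤ → ℝ)
    (hag : ∀ m : ℤ, ℓ - 1 ≤ m → m ≤ n + 1 → τ₁ m = τ₂ m) :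
    hamAux J h ℓ n τ₁ = hamAux J h ℓ n τ₂ := by
  unfold hamAux
  have e1 : ∑ m ∈ Finset.Icc ℓ (n + 1), τ₁ (m - 1) * τ₁ m
      = ∑ m ∈ Finset.Icc ℓ (n + 1), τ₂ (m - 1) * τ₂ m := by
    refine Finset.sum_congr rfl fun m hm => ?_
    simp only [Finset.mem_Icc] at hm
    rw [hag (m - 1) (by omega) (by omega), hag m (by omega) (by omega)]
  have e2 : ∑ m ∈ Finset.Icc ℓ n, h m * τ₁ m = ∑ m ∈ Finset.Icc ℓ n, h m * τ₂ m := by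
    refine Finset.sum_congr rfl fun m hm => ?_
    simp only [Finset.mem_Icc] at hm
    rw [hag m (by omega) (by omega)]
  rw [e1, e2]

lemma hamAux_top (J : ℝ) (h : ℤ → ℝ) (ℓ n : ℤ) (hn : ℓ ≤ n + 1) (τ : ℤ → ℝ) :
    hamAux J h ℓ (n + 1) τ
      = hamAux J h ℓ n τ + J * (τ (n + 1) * τ (n + 2)) + h (n + 1) * τ (n + 1) := by
  unfold hamAux
  rw [sum_Icc_top ℓ (n + 1) (by omega), sum_Icc_top ℓ n hn (fun m => τ (m - 1) * τ m),
    sum_Icc_top ℓ n hn (fun m => h m * τ m),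
    show n + 1 + 1 - 1 = n + 1 from by ring, show n + 1 + 1 = n + 2 from by ring]
  ring

lemma ham_step (J : ℝ) (h : ℤ → ℝ) (ℓ n : ℤ) (hn : ℓ ≤ n + 1) (a b : ℝ) (σ : ℤ → ℝ) :
    ham J h ℓ (n + 1) a b σ
      = ham J h ℓ n a (σ (n + 1)) σ + J * (σ (n + 1) * b) + h (n + 1) * σ (n + 1) := by
  rw [ham_eq, ham_eq, hamAux_top J h ℓ n hn]
  have e1 : hamAux J h ℓ n (bdry ℓ (n + 1) a b σ) = hamAux J h ℓ n (bdry ℓ n a (σ (n + 1)) σ) := by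
    refine hamAux_congr J h ℓ n _ _ fun m hm1 hm2 => ?_
    unfold bdry
    by_cases h1 : m = ℓ - 1
    · rw [if_pos h1, if_pos h1]
    · rw [if_neg h1, if_neg h1, if_neg (by omega : ¬ m = n + 1 + 1)]
      by_cases h2 : m = n + 1
      · rw [if_pos h2, h2]
      · rw [if_neg h2]
  have e2 : bdry ℓ (n + 1) a b σ (n + 1) = σ (n + 1) := by
    unfold bdry; rw [if_neg (by omega), if_neg (by omega)]
  have e3 : bdry ℓ (n + 1) a b σ (n + 2) = b := by
    unfold bdry; rw [if_neg (by omega), if_pos (by ring)]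
  rw [e1, e2, e3]

lemma ham_update (J : ℝ) (h : ℤ → ℝ) (ℓ n : ℤ) (a s c : ℝ) (σ : ℤ → ℝ) :
    ham J h ℓ n a s (Function.update σ (n + 1) c) = ham J h ℓ n a s σ := by
  rw [ham_eq, ham_eq]
  congr 1
  funext m
  unfold bdry
  split_ifs with h1 h2
  · rfl
  · rfl
  · rw [Function.update_of_ne h2]

lemma bddAbove_image_add (S : Set ℝ) (hb : BddAbove S) (c : ℝ) :
    BddAbove ((fun x => x + c) '' S) := by
  obtain ⟨B, hB⟩ := hb
  refine ⟨B + c, ?_⟩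
  rintro x ⟨y, hy, rfl⟩
  exact add_le_add_left (hB hy) c

lemma sSup_image_add (S : Set ℝ) (hne : S.Nonempty) (hb : BddAbove S) (c : ℝ) :
    sSup ((fun x => x + c) '' S) = sSup S + c := by
  apply le_antisymm
  · refine csSup_le (hne.image _) ?_
    rintro x ⟨y, hy, rfl⟩
    exact add_le_add_left (le_csSup hb hy) c
  · have : sSup S ≤ sSup ((fun x => x + c) '' S) - c := by
      refine csSup_le hne fun y hy => ?_
      have h2 : y + c ≤ sSup ((fun x => x + c) '' S) :=
        le_csSup (bddAbove_image_add S hb c) ⟨y, hy, rfl⟩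
      linarith
    linarith

lemma maxHam_step (J : ℝ) (hJ : 0 ≤ J) (h : ℤ → ℝ) (ℓ n : ℤ) (hn : ℓ ≤ n + 1) (a b : ℝ)
    (ha : a = 1 ∨ a = -1) (hb : b = 1 ∨ b = -1) :
    maxHam J h ℓ (n + 1) a b
      = max (maxHam J h ℓ n a 1 + (J * b + h (n + 1)))
            (maxHam J h ℓ n a (-1) + (-(J * b) - h (n + 1))) := by
  rw [maxHam_eq, maxHam_eq, maxHam_eq]
  have hset : hamSet J h ℓ (n + 1) a b
      = ((fun x => x + (J * b + h (n + 1))) '' hamSet J h ℓ n a 1)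
        ∪ ((fun x => x + (-(J * b) - h (n + 1))) '' hamSet J h ℓ n a (-1)) := by
    ext x
    constructor
    · rintro ⟨σ, hσ, rfl⟩
      rcases hσ (n + 1) with hs | hs
      · left
        refine ⟨ham J h ℓ n a 1 σ, ⟨σ, hσ, rfl⟩, ?_⟩
        rw [ham_step J h ℓ n hn a b σ, hs]; ring
      · right
        refine ⟨ham J h ℓ n a (-1) σ, ⟨σ, hσ, rfl⟩, ?_⟩
        rw [ham_step J h ℓ n hn a b σ, hs]; ring
    · rintro (⟨y, ⟨σ, hσ, rfl⟩, rfl⟩ | ⟨y, ⟨σ, hσ, rfl⟩, rfl⟩)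
      · refine ⟨Function.update σ (n + 1) 1, ?_, ?_⟩
        · intro m
          rcases eq_or_ne m (n + 1) with rfl | hm
          · simp
          · rw [Function.update_of_ne hm]; exact hσ m
        · rw [ham_step J h ℓ n hn a b, Function.update_self, ham_update]
          ring
      · refine ⟨Function.update σ (n + 1) (-1), ?_, ?_⟩
        · intro m
          rcases eq_or_ne m (n + 1) with rfl | hm
          · simp
          · rw [Function.update_of_ne hm]; exact hσ m
        · rw [ham_step J h ℓ n hn a b, Function.update_self, ham_update]
          ring
  rw [hset, csSup_union
      (bddAbove_image_add _ (hamSet_bddAbove J hJ h ℓ n a 1 ha (Or.inl rfl)) _)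
      ((hamSet_nonempty J h ℓ n a 1).image _)
      (bddAbove_image_add _ (hamSet_bddAbove J hJ h ℓ n a (-1) ha (Or.inr rfl)) _)
      ((hamSet_nonempty J h ℓ n a (-1)).image _),
    sSup_image_add _ (hamSet_nonempty J h ℓ n a 1)
      (hamSet_bddAbove J hJ h ℓ n a 1 ha (Or.inl rfl)),
    sSup_image_add _ (hamSet_nonempty J h ℓ n a (-1))
      (hamSet_bddAbove J hJ h ℓ n a (-1) ha (Or.inr rfl))]

lemma final_id (J Γ M₁ M₂ c : ℝ) (hJ : 0 < J) (hΓ : Γ = 2 * J) :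
    hatb Γ (M₁ - M₂ + 2 * c)
      = max (M₁ + (J * 1 + c)) (M₂ + (-(J * 1) - c))
        - max (M₁ + (J * (-1) + c)) (M₂ + (-(J * (-1)) - c)) := by
  subst hΓ
  unfold hatb
  rcases le_total (M₁ - M₂ + 2 * c) (-(2 * J)) with h1 | h1
  · rw [min_eq_right (by linarith), max_eq_left (by linarith),
      max_eq_right (show M₁ + (J * 1 + c) ≤ M₂ + (-(J * 1) - c) from by linarith),
      max_eq_right (show M₁ + (J * (-1) + c) ≤ M₂ + (-(J * (-1)) - c) from by linarith)]
    ring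
  · rcases le_total (M₁ - M₂ + 2 * c) (2 * J) with h2 | h2
    · rw [min_eq_right (by linarith), max_eq_right (by linarith),
        max_eq_left (show M₂ + (-(J * 1) - c) ≤ M₁ + (J * 1 + c) from by linarith),
        max_eq_right (show M₁ + (J * (-1) + c) ≤ M₂ + (-(J * (-1)) - c) from by linarith)]
      ring
    · rw [min_eq_left (by linarith), max_eq_right (by linarith),
        max_eq_left (show M₂ + (-(J * 1) - c) ≤ M₁ + (J * 1 + c) from by linarith),
        max_eq_left (show M₂ + (-(J * (-1)) - c) ≤ M₁ + (J * (-1) + c) from by linarith)]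
      ring

end Stmt18Aux

open Stmt18Aux in
theorem stmt_18 (J : ℝ) (hJ : 0 < J) (Γ : ℝ) (hΓ : Γ = 2 * J)
    (h : ℤ → ℝ) (ℓ : ℤ) (a : ℝ) (ha : a = 1 ∨ a = -1)
    (lhat : ℕ → ℝ) (hinit : lhat 0 = a * Γ)
    (hrec : ∀ k : ℕ, lhat (k + 1) = hatb Γ (lhat k + 2 * h (ℓ + (k : ℤ))))
    (k : ℕ) :
    lhat k = maxHam J h ℓ (ℓ - 1 + (k : ℤ)) a 1 - maxHam J h ℓ (ℓ - 1 + (k : ℤ)) a (-1) := by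
  induction k with
  | zero =>
      simp only [Nat.cast_zero, add_zero]
      rw [hinit, maxHam_base, maxHam_base, hΓ]
      ring
  | succ k ih =>
      push_cast
      rw [show ℓ - 1 + ((k : ℤ) + 1) = (ℓ - 1 + (k : ℤ)) + 1 from by ring,
        maxHam_step J hJ.le h ℓ (ℓ - 1 + (k : ℤ)) (by omega) a 1 ha (Or.inl rfl),
        maxHam_step J hJ.le h ℓ (ℓ - 1 + (k : ℤ)) (by omega) a (-1) ha (Or.inr rfl),
        hrec k, ih, show ℓ - 1 + (k : ℤ) + 1 = ℓ + (k : ℤ) from by ring]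
      exact final_id J Γ _ _ _ hJ hΓ
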